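/- Let n ≥ 2, let c : Fin n → ℝ satisfy c_k > 0 for every k, and for each k let v_k ∈ ℝⁿ be the 0/1-vector with (v_k)_i = 1 if i ≠ k and (v_k)_k = 0. Then the symmetric n × n real matrix M = ∑_{k} c_k · v_k v_kᵀ, i.e. M_{ij} = ∑_k c_k · [i ≠ k] · [j ≠ k], is positive definite; in particular it is invertible. This establishes the invertibility of the local FCFV matrix m_e (whose entries are (m_e)_{IJ} = ∑_k (τ_k |Γ_{e,k}| / n_fn²) χ_{F_{e,k}}(I) χ_{F_{e,k}}(J), with positive stabilisation parameters τ_k and positive face measures |Γ_{e,k}|, and where each face of a triangle or tetrahedron contains exactly the nodes different from the opposite vertex), which is required for the explicit local solve u_e = m_e⁻¹ b_e + m_e⁻¹ ∑_j τ_j r_j û_j of the second-order FCFV method. -/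

import Mathlib

/-- Positive definiteness (hence invertibility) of the local FCFV matrix:
for positive coefficients `c k`, the matrix
`M i j = ∑ k, c k * [i ≠ k] * [j ≠ k]` is positive definite and invertible. -/
theorem fcfv_local_matrix_posDef
    (n : ℕ) (hn : 2 ≤ n) (c : Fin n → ℝ) (hc : ∀ k, 0 < c k) :
    (Matrix.PosDef (fun i j =>
        ∑ k, c k * (if i ≠ k then (1 : ℝ) else 0) * (if j ≠ k then 1 else 0) :
      Matrix (Fin n) (Fin n) ℝ)) ∧
    IsUnit (Matrix.det (fun i j =>
        ∑ k, c k * (if i ≠ k then (1 : ℝ) else 0) * (if j ≠ k then 1 else 0) :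
      Matrix (Fin n) (Fin n) ℝ)) := by
  set M : Matrix (Fin n) (Fin n) ℝ := fun i j =>
      ∑ k, c k * (if i ≠ k then (1 : ℝ) else 0) * (if j ≠ k then 1 else 0) with hM
  have hPD : M.PosDef := by
    refine Matrix.PosDef.of_dotProduct_mulVec_pos ?_ ?_
    · ext i j
      rw [Matrix.conjTranspose_apply]
      simp only [hM, Matrix.conjTranspose_apply, star_trivial]
      apply Finset.sum_congr rfl
      intro k _
      split_ifs <;> ring
    · intro x hx
      set s : Fin n → ℝ := fun k => ∑ j, (if j ≠ k then x j else 0) with hs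
      have hmv : ∀ i, M.mulVec x i
          = ∑ k, (c k * (if i ≠ k then (1 : ℝ) else 0)) * s k := by
        intro i
        simp only [Matrix.mulVec, dotProduct, hM, Finset.sum_mul]
        rw [Finset.sum_comm]
        apply Finset.sum_congr rfl
        intro k _
        rw [hs, Finset.mul_sum]
        apply Finset.sum_congr rfl
        intro j _
        split_ifs <;> ring
      have key : dotProduct (star x) (M.mulVec x) = ∑ k, c k * (s k) ^ 2 := by
        simp only [dotProduct, star_trivial, hmv, Finset.mul_sum]
        rw [Finset.sum_comm]
        apply Finset.sum_congr rfl
        intro k _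
        have : (∑ i, x i * ((c k * (if i ≠ k then (1:ℝ) else 0)) * s k))
            = c k * s k * ∑ i, (if i ≠ k then x i else 0) := by
          rw [Finset.mul_sum]
          apply Finset.sum_congr rfl
          intro i _
          split_ifs <;> ring
        rw [this]
        show c k * s k * s k = c k * s k ^ 2
        ring
      rw [key]
      have hsplit : ∀ k, s k = (∑ i, x i) - x k := by
        intro k
        show (∑ j, if j ≠ k then x j else 0) = (∑ i, x i) - x k
        have : ∀ i ∈ Finset.univ, (if i ≠ k then x i else 0)
            = x i - (if i = k then x i else 0) := by
          intro i _
          split_ifs <;> simp_all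
        rw [Finset.sum_congr rfl this, Finset.sum_sub_distrib,
          Finset.sum_ite_eq' Finset.univ k x]
        simp
      have hex : ∃ k, s k ≠ 0 := by
        by_contra h
        push_neg at h
        have hTall : ∀ k, x k = ∑ i, x i := by
          intro k
          have := h k
          rw [hsplit k] at this
          linarith
        have hsum : (∑ i, x i) = n * (∑ i, x i) := by
          conv_lhs => rw [Finset.sum_congr rfl (fun i _ => hTall i)]
          simp [mul_comm]
        have hn' : (1 : ℝ) < n := by exact_mod_cast Nat.lt_of_lt_of_le Nat.one_lt_two hn
        have hT0 : (∑ i, x i) = 0 := by nlinarith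
        exact hx (funext fun k => by rw [hTall k, hT0]; rfl)
      obtain ⟨k0, hk0⟩ := hex
      apply Finset.sum_pos'
      · intro k _
        exact mul_nonneg (hc k).le (sq_nonneg _)
      · exact ⟨k0, Finset.mem_univ k0,
          mul_pos (hc k0) (lt_of_le_of_ne (sq_nonneg _) (Ne.symm (pow_ne_zero 2 hk0)))⟩
  refine ⟨hPD, isUnit_iff_ne_zero.mpr ?_⟩
  exact ne_of_gt hPD.det_pos
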